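/- With K and P as in the exact block triangular preconditioning of the saddle-point matrix (P using the exact Schur complement S = B F⁻¹ Bᵀ + C), the matrix K P⁻¹ − I is nilpotent with (K P⁻¹ − I)² = 0; consequently every eigenvalue of K P⁻¹ equals 1. -/
import Mathlib


open Matrix

theorem preconditioned_saddle_point_nilpotent {n m : ℕ}
    (F : Matrix (Fin n) (Fin n) ℝ) (B : Matrix (Fin m) (Fin n) ℝ)
    (C S : Matrix (Fin m) (Fin m) ℝ)
    (hF : IsUnit F) (hS : S = B * F⁻¹ * Bᵀ + C) (hSu : IsUnit S)
    (K P : Matrix (Fin n ⊕ Fin m) (Fin n ⊕ Fin m) ℝ)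
    (hK : K = Matrix.fromBlocks F Bᵀ B (-C))
    (hP : P = Matrix.fromBlocks F Bᵀ 0 (-S)) :
    (K * P⁻¹ - 1) ^ 2 = 0 ∧ ∀ μ ∈ spectrum ℝ (K * P⁻¹), μ = 1 := by
  have hFd : IsUnit F.det := (Matrix.isUnit_iff_isUnit_det F).mp hF
  have hSd : IsUnit S.det := (Matrix.isUnit_iff_isUnit_det S).mp hSu
  have hFF : F * F⁻¹ = 1 := Matrix.mul_nonsing_inv F hFd
  have hSS : S * S⁻¹ = 1 := Matrix.mul_nonsing_inv S hSd
  set P' := Matrix.fromBlocks F⁻¹ (F⁻¹ * Bᵀ * S⁻¹) 0 (-S⁻¹) with hP'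
  have hPP' : P * P' = 1 := by
    rw [hP, hP', Matrix.fromBlocks_multiply]
    have h1 : F * (F⁻¹ * Bᵀ * S⁻¹) + Bᵀ * -S⁻¹ = 0 := by
      rw [← Matrix.mul_assoc, ← Matrix.mul_assoc, hFF, Matrix.one_mul]
      simp [Matrix.mul_assoc]
    rw [h1]
    simp [hFF, hSS, ← Matrix.fromBlocks_one]
  have hPinv : P⁻¹ = P' := Matrix.inv_eq_right_inv hPP'
  set M := Matrix.fromBlocks (1 : Matrix (Fin n) (Fin n) ℝ) 0 (B * F⁻¹)
    (1 : Matrix (Fin m) (Fin m) ℝ) with hM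
  have hKP : K * P⁻¹ = M := by
    rw [hPinv, hK, hP', Matrix.fromBlocks_multiply, hM]
    have h1 : F * (F⁻¹ * Bᵀ * S⁻¹) + Bᵀ * -S⁻¹ = 0 := by
      rw [← Matrix.mul_assoc, ← Matrix.mul_assoc, hFF, Matrix.one_mul]
      simp [Matrix.mul_assoc]
    have h2 : B * (F⁻¹ * Bᵀ * S⁻¹) + -C * -S⁻¹ = 1 := by
      have : B * (F⁻¹ * Bᵀ * S⁻¹) + -C * -S⁻¹ = (B * F⁻¹ * Bᵀ + C) * S⁻¹ := by
        rw [Matrix.add_mul]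
        simp [Matrix.mul_assoc]
      rw [this, ← hS, hSS]
    rw [h1, h2]
    simp [hFF]
  have hN : M - 1 = Matrix.fromBlocks 0 0 (B * F⁻¹) 0 := by
    rw [hM, ← Matrix.fromBlocks_one, sub_eq_add_neg, Matrix.fromBlocks_neg,
      Matrix.fromBlocks_add]
    simp
  have hsq : (K * P⁻¹ - 1) ^ 2 = 0 := by
    rw [hKP, sq, hN, Matrix.fromBlocks_multiply]
    simp [← Matrix.fromBlocks_zero]
  refine ⟨hsq, ?_⟩
  intro μ hμ
  by_contra hne
  set N := K * P⁻¹ - 1 with hNdef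
  have hc : μ - 1 ≠ 0 := sub_ne_zero.mpr hne
  have key : IsUnit (algebraMap ℝ (Matrix (Fin n ⊕ Fin m) (Fin n ⊕ Fin m) ℝ) μ - K * P⁻¹) := by
    have heq : algebraMap ℝ (Matrix (Fin n ⊕ Fin m) (Fin n ⊕ Fin m) ℝ) μ - K * P⁻¹
        = (μ - 1) • 1 - N := by
      rw [Algebra.algebraMap_eq_smul_one, hNdef]
      rw [sub_smul, one_smul]
      abel
    have hN2 : N * N = 0 := by rw [← sq]; exact hsq
    set c := μ - 1 with hcdef
    have hmul : ((c • 1 - N) * (c⁻¹ • (1 : Matrix (Fin n ⊕ Fin m) (Fin n ⊕ Fin m) ℝ) + (c⁻¹ * c⁻¹) • N)) = 1 := by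
      rw [sub_mul, mul_add, mul_add]
      rw [smul_mul_smul_comm, smul_mul_smul_comm, Matrix.mul_smul, Matrix.mul_smul]
      simp [hN2, mul_one, hc, mul_comm, mul_assoc, smul_smul]
    have hmul2 : ((c⁻¹ • (1 : Matrix (Fin n ⊕ Fin m) (Fin n ⊕ Fin m) ℝ) + (c⁻¹ * c⁻¹) • N) * (c • 1 - N)) = 1 := by
      rw [mul_sub, add_mul, add_mul]
      rw [smul_mul_smul_comm, smul_mul_smul_comm, Matrix.smul_mul, Matrix.smul_mul]
      simp [hN2, mul_one, hc, mul_comm, mul_assoc, smul_smul]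
    rw [heq]
    exact ⟨⟨c • 1 - N, c⁻¹ • 1 + (c⁻¹ * c⁻¹) • N, hmul, hmul2⟩, rfl⟩
  exact (spectrum.mem_iff.mp hμ) key
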